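/- Let I ⊆ ℝ be an open interval and let x₀, x₁, x₂ : I → ℝ² be differentiable functions such that for each t ∈ I the points x₀(t), x₁(t), x₂(t) are affinely independent. Let u₀, u₁, u₂ : I → ℝ be differentiable functions. For each t ∈ I, let u_t : ℝ² → ℝ be the unique affine map with u_t(xⱼ(t)) = uⱼ(t), let w_t : ℝ² → ℝ be the unique affine map with w_t(xⱼ(t)) = uⱼ'(t), and let Ẋ_t : ℝ² → ℝ² be the unique affine map with Ẋ_t(xⱼ(t)) = xⱼ'(t), for j = 0, 1, 2. Then for every fixed x ∈ ℝ², the function t ↦ u_t(x) is differentiable on I and ∂u_t(x)/∂t = w_t(x) − ⟨∇u_t, Ẋ_t(x)⟩, where ∇u_t ∈ ℝ² is the (constant) gradient of the affine map u_t. -/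

import Mathlib

open Real Set

lemma det2_ne_zero (v : Fin 3 → EuclideanSpace ℝ (Fin 2)) (h : AffineIndependent ℝ v) :
    (v 1 0 - v 0 0) * (v 2 1 - v 0 1) - (v 1 1 - v 0 1) * (v 2 0 - v 0 0) ≠ 0 := by
  intro hd
  have key : ∀ c1 c2 : ℝ, c1 • (v 1 - v 0) + c2 • (v 2 - v 0) = (0 : EuclideanSpace ℝ (Fin 2)) →
      c1 = 0 ∧ c2 = 0 := by
    intro c1 c2 hc
    have hsum : (Finset.univ : Finset (Fin 3)).sum ![-(c1+c2), c1, c2] = 0 := by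
      simp [Fin.sum_univ_three]
    have hcomb : ∑ e : Fin 3, (![-(c1+c2), c1, c2]) e • v e = 0 := by
      have h2 : ∑ e : Fin 3, (![-(c1+c2), c1, c2]) e • v e
          = c1 • (v 1 - v 0) + c2 • (v 2 - v 0) := by
        simp [Fin.sum_univ_three]
        module
      rw [h2, hc]
    have hw := affineIndependent_iff.mp h Finset.univ ![-(c1+c2), c1, c2] hsum hcomb
    exact ⟨by simpa using hw 1 (by simp), by simpa using hw 2 (by simp)⟩
  have comp : ∀ c1 c2 : ℝ,
      c1 * (v 1 0 - v 0 0) + c2 * (v 2 0 - v 0 0) = 0 →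
      c1 * (v 1 1 - v 0 1) + c2 * (v 2 1 - v 0 1) = 0 →
      c1 = 0 ∧ c2 = 0 := by
    intro c1 c2 h0 h1
    apply key
    ext i
    fin_cases i <;>
      simp only [PiLp.add_apply, PiLp.smul_apply, PiLp.sub_apply, PiLp.zero_apply,
        smul_eq_mul, Fin.mk_zero, Fin.mk_one, Fin.isValue] <;>
      [linear_combination h0; linear_combination h1]
  by_cases hEB : (v 2 1 - v 0 1) = 0 ∧ (v 1 1 - v 0 1) = 0
  · by_cases hCA : (v 2 0 - v 0 0) = 0 ∧ (v 1 0 - v 0 0) = 0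
    · have := comp 1 0 (by rw [hCA.2]; ring) (by rw [hEB.2]; ring)
      simp at this
    · have := comp (v 2 0 - v 0 0) (-(v 1 0 - v 0 0)) (by ring)
        (by rw [hEB.1, hEB.2]; ring)
      exact hCA ⟨this.1, by linarith [this.2]⟩
  · have := comp (v 2 1 - v 0 1) (-(v 1 1 - v 0 1)) (by linear_combination hd) (by ring)
    exact hEB ⟨this.1, by linarith [this.2]⟩

theorem fe_solution_time_derivative
    (a b : ℝ)
    (x x' : Fin 3 → ℝ → EuclideanSpace ℝ (Fin 2))
    (hx : ∀ j, ∀ t ∈ Ioo a b, HasDerivAt (x j) (x' j t) t)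
    (hind : ∀ t ∈ Ioo a b, AffineIndependent ℝ (fun j => x j t))
    (u u' : Fin 3 → ℝ → ℝ)
    (hu : ∀ j, ∀ t ∈ Ioo a b, HasDerivAt (u j) (u' j t) t)
    (g : ℝ → EuclideanSpace ℝ (Fin 2)) (b₀ : ℝ → ℝ)
    (hg : ∀ t ∈ Ioo a b, ∀ j, (inner ℝ (g t) (x j t) : ℝ) + b₀ t = u j t)
    (gw : ℝ → EuclideanSpace ℝ (Fin 2)) (bw : ℝ → ℝ)
    (hgw : ∀ t ∈ Ioo a b, ∀ j, (inner ℝ (gw t) (x j t) : ℝ) + bw t = u' j t)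
    (W : ℝ → (EuclideanSpace ℝ (Fin 2) →ᵃ[ℝ] EuclideanSpace ℝ (Fin 2)))
    (hW : ∀ t ∈ Ioo a b, ∀ j, W t (x j t) = x' j t) :
    ∀ p : EuclideanSpace ℝ (Fin 2), ∀ t ∈ Ioo a b,
      HasDerivAt (fun s => (inner ℝ (g s) p : ℝ) + b₀ s)
        (((inner ℝ (gw t) p : ℝ) + bw t) - (inner ℝ (g t) (W t p) : ℝ)) t := by
  intro p t ht
  have hmem : Ioo a b ∈ nhds t := Ioo_mem_nhds ht.1 ht.2
  -- expanded interpolation identities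
  have hginner : ∀ s ∈ Ioo a b, ∀ j : Fin 3,
      g s 0 * x j s 0 + g s 1 * x j s 1 + b₀ s = u j s := by
    intro s hs j
    have h := hg s hs j
    simpa [PiLp.inner_apply, Fin.sum_univ_two, mul_comm] using h
  have hgwinner : ∀ j : Fin 3,
      gw t 0 * x j t 0 + gw t 1 * x j t 1 + bw t = u' j t := by
    intro j
    have h := hgw t ht j
    simpa [PiLp.inner_apply, Fin.sum_univ_two, mul_comm] using h
  -- determinant
  set D : ℝ → ℝ := fun s =>
    (x 1 s 0 - x 0 s 0) * (x 2 s 1 - x 0 s 1) - (x 1 s 1 - x 0 s 1) * (x 2 s 0 - x 0 s 0)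
    with hDdef
  have hDne : ∀ s ∈ Ioo a b, D s ≠ 0 := fun s hs => det2_ne_zero (fun j => x j s) (hind s hs)
  -- explicit formulas for the affine coefficients
  set G0 : ℝ → ℝ := fun s =>
    ((u 1 s - u 0 s) * (x 2 s 1 - x 0 s 1) - (u 2 s - u 0 s) * (x 1 s 1 - x 0 s 1)) / D s
    with hG0def
  set G1 : ℝ → ℝ := fun s =>
    ((x 1 s 0 - x 0 s 0) * (u 2 s - u 0 s) - (x 2 s 0 - x 0 s 0) * (u 1 s - u 0 s)) / D s
    with hG1def
  set Bf : ℝ → ℝ := fun s => u 0 s - G0 s * x 0 s 0 - G1 s * x 0 s 1 with hBfdef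
  have hval0 : ∀ s ∈ Ioo a b, g s 0 = G0 s := by
    intro s hs
    rw [hG0def]
    rw [eq_div_iff (hDne s hs)]
    simp only [hDdef]
    linear_combination (x 2 s 1 - x 0 s 1) * (hginner s hs 1)
      - (x 2 s 1 - x 0 s 1) * (hginner s hs 0)
      - (x 1 s 1 - x 0 s 1) * (hginner s hs 2)
      + (x 1 s 1 - x 0 s 1) * (hginner s hs 0)
  have hval1 : ∀ s ∈ Ioo a b, g s 1 = G1 s := by
    intro s hs
    rw [hG1def]
    rw [eq_div_iff (hDne s hs)]
    simp only [hDdef]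
    linear_combination (x 1 s 0 - x 0 s 0) * (hginner s hs 2)
      - (x 1 s 0 - x 0 s 0) * (hginner s hs 0)
      - (x 2 s 0 - x 0 s 0) * (hginner s hs 1)
      + (x 2 s 0 - x 0 s 0) * (hginner s hs 0)
  have hvalB : ∀ s ∈ Ioo a b, b₀ s = Bf s := by
    intro s hs
    simp only [hBfdef]
    rw [← hval0 s hs, ← hval1 s hs]
    linear_combination hginner s hs 0
  -- differentiability
  have hxd : ∀ (j : Fin 3) (i : Fin 2), ∀ s ∈ Ioo a b,
      HasDerivAt (fun r => x j r i) (x' j s i) s := by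
    intro j i s hs
    have h2 := (EuclideanSpace.proj (𝕜 := ℝ) i).hasFDerivAt.comp_hasDerivAt s (hx j s hs)
    exact h2
  have dx : ∀ (j : Fin 3) (i : Fin 2), DifferentiableAt ℝ (fun r => x j r i) t :=
    fun j i => (hxd j i t ht).differentiableAt
  have du : ∀ j : Fin 3, DifferentiableAt ℝ (u j) t := fun j => (hu j t ht).differentiableAt
  have hdiffD : DifferentiableAt ℝ D t := by
    simp only [hDdef]
    exact (((dx 1 0).sub (dx 0 0)).mul ((dx 2 1).sub (dx 0 1))).sub
      (((dx 1 1).sub (dx 0 1)).mul ((dx 2 0).sub (dx 0 0)))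
  have hdiffG0 : DifferentiableAt ℝ G0 t := by
    simp only [hG0def]
    exact ((((du 1).sub (du 0)).mul ((dx 2 1).sub (dx 0 1))).sub
      (((du 2).sub (du 0)).mul ((dx 1 1).sub (dx 0 1)))).div hdiffD (hDne t ht)
  have hdiffG1 : DifferentiableAt ℝ G1 t := by
    simp only [hG1def]
    exact ((((dx 1 0).sub (dx 0 0)).mul ((du 2).sub (du 0))).sub
      (((dx 2 0).sub (dx 0 0)).mul ((du 1).sub (du 0)))).div hdiffD (hDne t ht)
  have hdiffBf : DifferentiableAt ℝ Bf t := by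
    simp only [hBfdef]
    exact ((du 0).sub (hdiffG0.mul (dx 0 0))).sub (hdiffG1.mul (dx 0 1))
  have hG0 : HasDerivAt G0 (deriv G0 t) t := hdiffG0.hasDerivAt
  have hG1 : HasDerivAt G1 (deriv G1 t) t := hdiffG1.hasDerivAt
  have hBf : HasDerivAt Bf (deriv Bf t) t := hdiffBf.hasDerivAt
  -- the key differentiated interpolation identities
  have e3 : ∀ j : Fin 3,
      deriv G0 t * x j t 0 + g t 0 * x' j t 0 + (deriv G1 t * x j t 1 + g t 1 * x' j t 1)
        + deriv Bf t = u' j t := by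
    intro j
    have hF : HasDerivAt (fun s => G0 s * x j s 0 + G1 s * x j s 1 + Bf s)
        (deriv G0 t * x j t 0 + G0 t * x' j t 0
          + (deriv G1 t * x j t 1 + G1 t * x' j t 1) + deriv Bf t) t :=
      ((hG0.mul (hxd j 0 t ht)).add (hG1.mul (hxd j 1 t ht))).add hBf
    have heq : (fun s => G0 s * x j s 0 + G1 s * x j s 1 + Bf s) =ᶠ[nhds t] u j :=
      Filter.eventuallyEq_of_mem hmem (fun s hs => by
        show G0 s * x j s 0 + G1 s * x j s 1 + Bf s = u j s
        rw [← hval0 s hs, ← hval1 s hs, ← hvalB s hs]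
        linear_combination hginner s hs j)
    have hF' : HasDerivAt (fun s => G0 s * x j s 0 + G1 s * x j s 1 + Bf s) (u' j t) t :=
      (hu j t ht).congr_of_eventuallyEq heq
    rw [hval0 t ht, hval1 t ht]
    exact hF.unique hF'
  -- barycentric coordinates of p
  have hD0 : (x 1 t 0 - x 0 t 0) * (x 2 t 1 - x 0 t 1)
      - (x 1 t 1 - x 0 t 1) * (x 2 t 0 - x 0 t 0) ≠ 0 := by
    have := hDne t ht; rwa [hDdef] at this
  set α : ℝ := ((p 0 - x 0 t 0) * (x 2 t 1 - x 0 t 1)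
      - (p 1 - x 0 t 1) * (x 2 t 0 - x 0 t 0)) / D t with hαdef
  set β : ℝ := ((x 1 t 0 - x 0 t 0) * (p 1 - x 0 t 1)
      - (x 1 t 1 - x 0 t 1) * (p 0 - x 0 t 0)) / D t with hβdef
  have hp0 : p 0 = x 0 t 0 + α * (x 1 t 0 - x 0 t 0) + β * (x 2 t 0 - x 0 t 0) := by
    rw [hαdef, hβdef]
    simp only [hDdef]
    linear_combination (x 0 t 0 - p 0) * div_self hD0
  have hp1 : p 1 = x 0 t 1 + α * (x 1 t 1 - x 0 t 1) + β * (x 2 t 1 - x 0 t 1) := by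
    rw [hαdef, hβdef]
    simp only [hDdef]
    linear_combination (x 0 t 1 - p 1) * div_self hD0
  -- image of p under the affine map W t
  have hWp : ∀ i : Fin 2,
      W t p i = x' 0 t i + α * (x' 1 t i - x' 0 t i) + β * (x' 2 t i - x' 0 t i) := by
    have hp : p = (α • (x 1 t - x 0 t) + β • (x 2 t - x 0 t)) +ᵥ x 0 t := by
      ext i
      fin_cases i <;>
        simp only [PiLp.add_apply, PiLp.smul_apply, PiLp.sub_apply, vadd_eq_add,
          smul_eq_mul, Fin.mk_zero, Fin.mk_one, Fin.isValue] <;>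
        [linear_combination hp0; linear_combination hp1]
    have h1 : (W t).linear (x 1 t - x 0 t) = x' 1 t - x' 0 t := by
      have := AffineMap.linearMap_vsub (W t) (x 1 t) (x 0 t)
      rw [hW t ht 1, hW t ht 0] at this
      simpa [vsub_eq_sub] using this
    have h2 : (W t).linear (x 2 t - x 0 t) = x' 2 t - x' 0 t := by
      have := AffineMap.linearMap_vsub (W t) (x 2 t) (x 0 t)
      rw [hW t ht 2, hW t ht 0] at this
      simpa [vsub_eq_sub] using this
    have hWpeq : W t p = (α • (x' 1 t - x' 0 t) + β • (x' 2 t - x' 0 t)) +ᵥ x' 0 t := by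
      rw [hp, AffineMap.map_vadd, map_add, LinearMap.map_smul, LinearMap.map_smul,
        h1, h2, hW t ht 0]
    intro i
    rw [hWpeq]
    simp only [PiLp.add_apply, PiLp.smul_apply, PiLp.sub_apply, vadd_eq_add, smul_eq_mul]
    ring
  -- the derivative of the explicit formula
  have hFp : HasDerivAt (fun s => G0 s * p 0 + G1 s * p 1 + Bf s)
      (deriv G0 t * p 0 + deriv G1 t * p 1 + deriv Bf t) t :=
    ((hG0.mul_const (p 0)).add (hG1.mul_const (p 1))).add hBf
  have heqf : (fun s => (inner ℝ (g s) p : ℝ) + b₀ s)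
      =ᶠ[nhds t] (fun s => G0 s * p 0 + G1 s * p 1 + Bf s) :=
    Filter.eventuallyEq_of_mem hmem (fun s hs => by
      show (inner ℝ (g s) p : ℝ) + b₀ s = G0 s * p 0 + G1 s * p 1 + Bf s
      rw [← hval0 s hs, ← hval1 s hs, ← hvalB s hs]
      simp [PiLp.inner_apply, Fin.sum_univ_two, mul_comm])
  have hmain : HasDerivAt (fun s => (inner ℝ (g s) p : ℝ) + b₀ s)
      (deriv G0 t * p 0 + deriv G1 t * p 1 + deriv Bf t) t :=
    hFp.congr_of_eventuallyEq heqf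
  have hi1 : (inner ℝ (gw t) p : ℝ) = gw t 0 * p 0 + gw t 1 * p 1 := by
    simp [PiLp.inner_apply, Fin.sum_univ_two, mul_comm]
  have hi2 : (inner ℝ (g t) (W t p) : ℝ) = g t 0 * W t p 0 + g t 1 * W t p 1 := by
    simp [PiLp.inner_apply, Fin.sum_univ_two, mul_comm]
  have hvaleq : deriv G0 t * p 0 + deriv G1 t * p 1 + deriv Bf t
      = ((inner ℝ (gw t) p : ℝ) + bw t) - (inner ℝ (g t) (W t p) : ℝ) := by
    rw [hi1, hi2, hWp 0, hWp 1]
    linear_combination (1 - α - β) * e3 0 + α * e3 1 + β * e3 2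
      - (1 - α - β) * hgwinner 0 - α * hgwinner 1 - β * hgwinner 2
      + (deriv G0 t - gw t 0) * hp0 + (deriv G1 t - gw t 1) * hp1
  rw [← hvaleq]
  exact hmain
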